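/- Let L ⊆ ℤ^m be a lattice and let C = [c_1, …, c_n] ⊆ ℤ^m be a finitely generated cone. Then there exists a finite set B ⊆ C, consisting of points of C that are not lonely with respect to L, such that the set of all points of C that are not lonely with respect to L equals the finite union ⋃_{b ∈ B} (b + C), where b + C = {b + w : w ∈ C}. -/

import Mathlib

/-- A point `v` of `A ⊆ ℤ^m` is lonely with respect to the lattice `L` if `v ∈ A` and
no other point `w ∈ A` satisfies `w - v ∈ L`. -/
def IsLonely {m : ℕ} (L : AddSubgroup (Fin m → ℤ)) (A : Set (Fin m → ℤ))
    (v : Fin m → ℤ) : Prop :=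
  v ∈ A ∧ ∀ w ∈ A, w ≠ v → w - v ∉ L

/-- The cone generated by the vectors `c 1, …, c n`: all `ℕ`-linear combinations. -/
def coneGen {m n : ℕ} (c : Fin n → (Fin m → ℤ)) : Set (Fin m → ℤ) :=
  { v | ∃ β : Fin n → ℕ, v = ∑ j, (β j : ℤ) • c j }

theorem stmt_17 {m n : ℕ} (L : AddSubgroup (Fin m → ℤ)) (c : Fin n → (Fin m → ℤ)) :
    ∃ B : Finset (Fin m → ℤ),
      (∀ b ∈ B, b ∈ coneGen c ∧ ¬ IsLonely L (coneGen c) b) ∧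
      {v | v ∈ coneGen c ∧ ¬ IsLonely L (coneGen c) v}
        = ⋃ b ∈ B, {v | ∃ w ∈ coneGen c, v = b + w} := by
  classical
  set φ : (Fin n → ℕ) → (Fin m → ℤ) := fun β => ∑ j, (β j : ℤ) • c j with hφ
  have hφmem : ∀ β, φ β ∈ coneGen c := fun β => ⟨β, rfl⟩
  have hφadd : ∀ β γ, φ (β + γ) = φ β + φ γ := by
    intro β γ
    rw [hφ, ← Finset.sum_add_distrib]
    refine Finset.sum_congr rfl fun j _ => ?_
    have : (((β + γ) j : ℕ) : ℤ) = (β j : ℤ) + (γ j : ℤ) := by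
      simp [Pi.add_apply]
    rw [this, add_smul]
  -- the set of non-lonely points is closed under adding elements of the cone
  have hclosed : ∀ v w : Fin m → ℤ, v ∈ coneGen c → ¬ IsLonely L (coneGen c) v →
      w ∈ coneGen c → ¬ IsLonely L (coneGen c) (v + w) := by
    intro v w hv hnl hw hlon
    apply hnl
    refine ⟨hv, fun u hu hune hul => ?_⟩
    obtain ⟨βu, hβu⟩ := hu
    obtain ⟨βw, hβw⟩ := hw
    have huw : u + w ∈ coneGen c := ⟨βu + βw, by
      rw [hβu, hβw]; simp [add_smul, Finset.sum_add_distrib]⟩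
    exact hlon.2 (u + w) huw (fun h => hune (add_right_cancel h))
      (by simp only [add_sub_add_right_eq_sub]; exact hul)
  -- pull back to ℕ^n
  set T : Set (Fin n → ℕ) := {β | ¬ IsLonely L (coneGen c) (φ β)} with hT
  have hTup : ∀ β γ : Fin n → ℕ, β ∈ T → β ≤ γ → γ ∈ T := by
    intro β γ hβ hle
    have : γ = β + (γ - β) := by
      funext i; exact (Nat.add_sub_cancel' (hle i)).symm
    rw [hT, Set.mem_setOf_eq, this, hφadd]
    exact hclosed _ _ (hφmem β) hβ (hφmem _)
  -- minimal elements of T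
  set M : Set (Fin n → ℕ) := {β ∈ T | ∀ γ ∈ T, γ ≤ β → γ = β} with hM
  have hMfin : M.Finite := by
    refine IsAntichain.finite_of_partiallyWellOrderedOn ?_
      (Set.isPWO_of_wellQuasiOrderedLE M)
    intro a ha b hb hab hle
    exact hab (hb.2 a ha.1 hle)
  -- every element of T dominates a minimal element
  have hdom : ∀ β ∈ T, ∃ μ ∈ M, μ ≤ β := by
    have key : ∀ k : ℕ, ∀ β ∈ T, (∑ i, β i) = k → ∃ μ ∈ M, μ ≤ β := by
      intro k
      induction k using Nat.strong_induction_on with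
      | _ k ih =>
      intro β hβ hsum
      by_cases hmin : ∀ γ ∈ T, γ ≤ β → γ = β
      · exact ⟨β, ⟨hβ, hmin⟩, le_refl β⟩
      · push_neg at hmin
        obtain ⟨γ, hγT, hγle, hγne⟩ := hmin
        have hlt : ∑ i, γ i < k := by
          subst hsum
          have hle' : ∀ i, γ i ≤ β i := hγle
          have : ∃ i, γ i < β i := by
            by_contra h
            push_neg at h
            exact hγne (funext fun i => le_antisymm (hle' i) (h i))
          obtain ⟨i, hi⟩ := this
          exact Finset.sum_lt_sum (fun j _ => hle' j) ⟨i, Finset.mem_univ i, hi⟩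
        obtain ⟨μ, hμ, hμle⟩ := ih _ hlt γ hγT rfl
        exact ⟨μ, hμ, le_trans hμle hγle⟩
    exact fun β hβ => key _ β hβ rfl
  refine ⟨(hMfin.toFinset).image φ, ?_, ?_⟩
  · intro b hb
    simp only [Finset.mem_image, Set.Finite.mem_toFinset] at hb
    obtain ⟨μ, hμ, rfl⟩ := hb
    exact ⟨hφmem μ, hμ.1⟩
  · ext v
    simp only [Set.mem_setOf_eq, Set.mem_iUnion, Finset.mem_image,
      Set.Finite.mem_toFinset, exists_prop]
    constructor
    · rintro ⟨⟨β, rfl⟩, hnl⟩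
      obtain ⟨μ, hμM, hμle⟩ := hdom β hnl
      have hβeq : β = μ + (β - μ) :=
        funext fun i => (Nat.add_sub_cancel' (hμle i)).symm
      refine ⟨φ μ, ⟨μ, hμM, rfl⟩, φ (β - μ), hφmem _, ?_⟩
      rw [← hφadd, ← hβeq]
    · rintro ⟨b, ⟨μ, hμM, rfl⟩, w, hw, rfl⟩
      exact ⟨by
        obtain ⟨βw, rfl⟩ := hw
        exact ⟨μ + βw, (hφadd μ βw).symm⟩,
        hclosed _ _ (hφmem μ) hμM.1 hw⟩
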